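/- For all positive integers n, M, and q ≥ 1, the number of q-ary Zimin instances grows at least geometrically in length: |C(n,q,M+1)| ≥ q · |C(n,q,M)|. -/

import Mathlib

/-- `W` is an instance of the pattern `V`: the image of `V` under a semigroup
homomorphism sending each letter to a nonempty word. -/
def IsInst {α β : Type} (V : List α) (W : List β) : Prop :=
  ∃ φ : α → List β, (∀ a ∈ V, φ a ≠ []) ∧ W = (V.map φ).flatten

/-- `U` encounters `V`: some contiguous subword (infix) of `U` is an instance of `V`. -/
def Encounters {α β : Type} (U : List β) (V : List α) : Prop :=
  ∃ W : List β, W <:+: U ∧ IsInst V W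

/-- `U` avoids `V`: `U` does not encounter `V`. -/
def Avoids {α β : Type} (U : List β) (V : List α) : Prop :=
  ¬ Encounters U V

/-- The Zimin words over the alphabet ℕ: `Z₀ = ε`, `Z_{n+1} = Zₙ · n · Zₙ`. -/
def Zimin : ℕ → List ℕ
  | 0 => []
  | n + 1 => Zimin n ++ n :: Zimin n

/-- `zimf n q` is the smallest `M` such that every `q`-ary word of length `M`
encounters the Zimin word `Zₙ`. -/
noncomputable def zimf (n q : ℕ) : ℕ :=
  sInf {M : ℕ | ∀ W : List (Fin q), W.length = M → Encounters W (Zimin n)}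

/-- `ZC n q M` is the set of `q`-ary words of length `M` that are instances of `Zₙ`. -/
def ZC (n q M : ℕ) : Set (List (Fin q)) :=
  {W | W.length = M ∧ IsInst (Zimin n) W}

/-! ### Auxiliary material -/

theorem mem_zimin_lt : ∀ {m a : ℕ}, a ∈ Zimin m → a < m := by
  intro m
  induction m with
  | zero => intro a ha; simp [Zimin] at ha
  | succ m ih =>
    intro a ha
    simp only [Zimin, List.mem_append, List.mem_cons] at ha
    rcases ha with h | h | h
    · exact (ih h).trans (Nat.lt_succ_self m)
    · omega
    · exact (ih h).trans (Nat.lt_succ_self m)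

theorem isInst_succ_iff {q m : ℕ} {W : List (Fin q)} :
    IsInst (Zimin (m + 1)) W ↔
      ∃ B C : List (Fin q), IsInst (Zimin m) B ∧ C ≠ [] ∧ W = B ++ C ++ B := by
  constructor
  · rintro ⟨φ, hφ, rfl⟩
    refine ⟨((Zimin m).map φ).flatten, φ m,
      ⟨φ, fun a ha => hφ a (by simp [Zimin, ha]), rfl⟩,
      hφ m (by simp [Zimin]), ?_⟩
    simp [Zimin, List.append_assoc]
  · rintro ⟨B, C, ⟨ψ, hψ, rfl⟩, hC, rfl⟩
    refine ⟨fun a => if a = m then C else ψ a, ?_, ?_⟩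
    · intro a ha
      by_cases h : a = m
      · simpa [h] using hC
      · simp only [if_neg h]
        simp only [Zimin, List.mem_append, List.mem_cons] at ha
        rcases ha with h' | h' | h'
        · exact hψ a h'
        · exact absurd h' h
        · exact hψ a h'
    · have hm : ((Zimin m).map fun a => if a = m then C else ψ a) = (Zimin m).map ψ :=
        List.map_congr_left fun a ha => if_neg (Nat.ne_of_lt (mem_zimin_lt ha))
      simp [Zimin, hm, List.append_assoc]

/-- The set of possible "outer block" lengths in a decomposition of `W` as `B ++ C ++ B`
with `B` an instance of `Zimin m` and `C` nonempty. -/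
def Kset (m q : ℕ) (W : List (Fin q)) : Set ℕ :=
  {k | ∃ B C : List (Fin q), B.length = k ∧ IsInst (Zimin m) B ∧ C ≠ [] ∧ W = B ++ C ++ B}

/-- The minimal outer block length. -/
noncomputable def kmin (m q : ℕ) (W : List (Fin q)) : ℕ := sInf (Kset m q W)

theorem kmin_mem {m q : ℕ} {W : List (Fin q)} (h : IsInst (Zimin (m + 1)) W) :
    kmin m q W ∈ Kset m q W := by
  apply Nat.sInf_mem
  obtain ⟨B, C, h1, h2, h3⟩ := isInst_succ_iff.1 h
  exact ⟨B.length, B, C, rfl, h1, h2, h3⟩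

/-- The extension map: insert the letter `a` just before the final outer block. -/
noncomputable def gmap (m q : ℕ) (a : Fin q) (W : List (Fin q)) : List (Fin q) :=
  W.take (W.length - kmin m q W) ++ a :: W.take (kmin m q W)

theorem gmap_spec {m q : ℕ} {W : List (Fin q)} (h : IsInst (Zimin (m + 1)) W) (a : Fin q) :
    ∃ B C : List (Fin q), B.length = kmin m q W ∧ IsInst (Zimin m) B ∧ C ≠ [] ∧
      W = B ++ C ++ B ∧ gmap m q a W = B ++ C ++ a :: B := by
  obtain ⟨B, C, hBl, hBi, hC, hW⟩ := kmin_mem h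
  refine ⟨B, C, hBl, hBi, hC, hW, ?_⟩
  set k := kmin m q W with hk
  have h1 : W.take k = B := by
    rw [hW, List.append_assoc]
    exact List.take_left' hBl
  have h2 : W.take (W.length - k) = B ++ C := by
    have hlen : (B ++ C ++ B).length - k = (B ++ C).length := by
      simp [List.length_append]; omega
    rw [hW, hlen]
    exact List.take_left' rfl
  simp only [gmap, ← hk, h1, h2]

theorem sandwich {β : Type} {B W : List β} (h1 : B <+: W) (h2 : B <:+ W)
    (h3 : 2 * B.length < W.length) : ∃ D, D ≠ [] ∧ W = B ++ D ++ B := by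
  obtain ⟨T, rfl⟩ := h1
  have hBT : B <:+ T := by
    refine List.suffix_of_suffix_length_le h2 (List.suffix_append B T) ?_
    have := @List.length_append _ B T ▸ h3
    omega
  obtain ⟨D, rfl⟩ := hBT
  refine ⟨D, ?_, by simp [List.append_assoc]⟩
  intro hD
  subst hD
  simp [List.length_append] at h3
  omega

theorem kset_step {m q : ℕ} {B C B' C' : List (Fin q)} {a a' : Fin q}
    (hV : B ++ C ++ a :: B = B' ++ C' ++ a' :: B')
    (hBi : IsInst (Zimin m) B) (hC : C ≠ []) (hC' : C' ≠ [])
    (hk : B.length ≤ B'.length) :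
    B.length ∈ Kset m q (B' ++ C' ++ B') := by
  have prefB : B <+: B' ++ C' ++ a' :: B' := hV ▸ ⟨C ++ a :: B, by simp [List.append_assoc]⟩
  have prefB' : B' <+: B' ++ C' ++ a' :: B' := ⟨C' ++ a' :: B', by simp [List.append_assoc]⟩
  have suffB : B <:+ B' ++ C' ++ a' :: B' :=
    hV ▸ ⟨B ++ C ++ [a], by simp [List.append_assoc]⟩
  have suffB' : B' <:+ B' ++ C' ++ a' :: B' := ⟨B' ++ C' ++ [a'], by simp [List.append_assoc]⟩
  have hpref : B <+: B' := List.prefix_of_prefix_length_le prefB prefB' hk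
  have hsuff : B <:+ B' := List.suffix_of_suffix_length_le suffB suffB' hk
  have hprefW : B <+: B' ++ C' ++ B' :=
    hpref.trans ⟨C' ++ B', by simp [List.append_assoc]⟩
  have hsuffW : B <:+ B' ++ C' ++ B' :=
    hsuff.trans (List.suffix_append (B' ++ C') B')
  have hClen : 0 < C'.length := List.length_pos_iff.2 hC'
  have hlen : 2 * B.length < (B' ++ C' ++ B').length := by
    simp [List.length_append]; omega
  obtain ⟨D, hD, hDe⟩ := sandwich hprefW hsuffW hlen
  exact ⟨B, D, rfl, hBi, hD, hDe⟩

theorem gmap_inj {m q M : ℕ} {W W' : List (Fin q)} {a a' : Fin q}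
    (hW : W ∈ ZC (m + 1) q M) (hW' : W' ∈ ZC (m + 1) q M)
    (h : gmap m q a W = gmap m q a' W') : a = a' ∧ W = W' := by
  obtain ⟨hWl, hWi⟩ := hW
  obtain ⟨hWl', hWi'⟩ := hW'
  obtain ⟨B, C, hBl, hBi, hC, hWd, hg⟩ := gmap_spec hWi a
  obtain ⟨B', C', hBl', hBi', hC', hWd', hg'⟩ := gmap_spec hWi' a'
  have hV : B ++ C ++ a :: B = B' ++ C' ++ a' :: B' := by rw [← hg, ← hg', h]
  -- length bookkeeping
  have hMW : B.length + C.length + B.length = M := by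
    rw [← hWl, hWd]; simp [List.length_append]; omega
  have hMW' : B'.length + C'.length + B'.length = M := by
    rw [← hWl', hWd']; simp [List.length_append]; omega
  -- the two minimal lengths agree
  have hkk : B.length = B'.length := by
    rcases le_total B.length B'.length with hle | hle
    · have hmem := kset_step hV hBi hC hC' hle
      rw [← hWd'] at hmem
      have := Nat.sInf_le hmem
      rw [← kmin] at this
      omega
    · have hmem := kset_step hV.symm hBi' hC' hC hle
      rw [← hWd] at hmem
      have := Nat.sInf_le hmem
      rw [← kmin] at this
      omega
  -- hence the outer blocks agree
  have hBB : B = B' := by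
    have p1 : B <+: B' ++ C' ++ a' :: B' := hV ▸ ⟨C ++ a :: B, by simp [List.append_assoc]⟩
    have p2 : B' <+: B' ++ C' ++ a' :: B' := ⟨C' ++ a' :: B', by simp [List.append_assoc]⟩
    exact (List.prefix_of_prefix_length_le p1 p2 hkk.le).eq_of_length hkk
  subst hBB
  rw [List.append_assoc, List.append_assoc] at hV
  have hV2 : C ++ a :: B = C' ++ a' :: B := List.append_cancel_left hV
  have hCC : C = C' ∧ a :: B = a' :: B :=
    List.append_inj hV2 (by omega)
  have haa : a = a' := by
    injection hCC.2 with h1 h2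
  refine ⟨haa, ?_⟩
  rw [hWd, hWd', hCC.1]

theorem gmap_mem {m q M : ℕ} {W : List (Fin q)} (hW : W ∈ ZC (m + 1) q M) (a : Fin q) :
    gmap m q a W ∈ ZC (m + 1) q (M + 1) := by
  obtain ⟨hWl, hWi⟩ := hW
  obtain ⟨B, C, hBl, hBi, hC, hWd, hg⟩ := gmap_spec hWi a
  constructor
  · rw [hg, ← hWl, hWd]; simp [List.length_append]; omega
  · rw [hg]
    exact isInst_succ_iff.2 ⟨B, C ++ [a], hBi, by simp, by simp [List.append_assoc]⟩

/-- For all positive `n`, `M` and `q ≥ 1`, the number of `q`-ary Zimin instances grows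
at least geometrically in length: `|C(n,q,M+1)| ≥ q · |C(n,q,M)|`. -/
theorem ZC_card_succ_ge (n M q : ℕ) (hn : 0 < n) (hM : 0 < M) (hq : 1 ≤ q) :
    q * (ZC n q M).ncard ≤ (ZC n q (M + 1)).ncard := by
  obtain ⟨m, rfl⟩ : ∃ m, n = m + 1 := ⟨n - 1, by omega⟩
  classical
  have hfin : (ZC (m + 1) q (M + 1)).Finite :=
    (List.finite_length_eq (Fin q) (M + 1)).subset fun W hW => hW.1
  haveI : Finite (ZC (m + 1) q (M + 1)) := hfin.to_subtype
  let f : Fin q × (ZC (m + 1) q M) → (ZC (m + 1) q (M + 1)) :=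
    fun p => ⟨gmap m q p.1 p.2.1, gmap_mem p.2.2 p.1⟩
  have hinj : Function.Injective f := by
    rintro ⟨a, W, hW⟩ ⟨a', W', hW'⟩ hfe
    have := gmap_inj hW hW' (congrArg Subtype.val hfe)
    simp only [Prod.mk.injEq, Subtype.mk.injEq]
    exact ⟨this.1, this.2⟩
  calc q * (ZC (m + 1) q M).ncard
      = Nat.card (Fin q × (ZC (m + 1) q M)) := by
        rw [Nat.card_prod, Nat.card_eq_fintype_card, Fintype.card_fin,
          Nat.card_coe_set_eq]
    _ ≤ Nat.card (ZC (m + 1) q (M + 1)) := Nat.card_le_card_of_injective f hinj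
    _ = (ZC (m + 1) q (M + 1)).ncard := Nat.card_coe_set_eq _
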